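/- Let R = k[x,y,z], char(k) = 0, and let M be the R-module with generators δ_2, δ_3, δ_4 and relations y δ_2 + 2z δ_3 = 0 and x δ_2 - 3y δ_3 + z δ_4 = 0. Then the map φ: M → R given by φ(δ_2) = 2z², φ(δ_3) = -yz, φ(δ_4) = -(2xz + 3y²) is well-defined and injective, with image the ideal ⟨2z², yz, 2xz + 3y²⟩. -/

import Mathlib

open MvPolynomial

lemma primeX19 (k : Type) [Field k] (i : Fin 3) :
    Prime (X i : MvPolynomial (Fin 3) k) := by
  let e := (renameEquiv k (Equiv.swap i 0)).trans (MvPolynomial.finSuccEquiv k 2)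
  rw [← MulEquiv.prime_iff e.toMulEquiv]
  have h : e (X i) = Polynomial.X := by
    simp [e, Equiv.swap_apply_left, finSuccEquiv_X_zero]
  rw [show e.toMulEquiv (X i) = e (X i) from rfl, h]
  exact Polynomial.prime_X

lemma notdvd_const19 (k : Type) [Field k] [CharZero k] (i : Fin 3) (n : ℕ) (hn : (n : k) ≠ 0) :
    ¬ (X i : MvPolynomial (Fin 3) k) ∣ (n : MvPolynomial (Fin 3) k) := by
  rw [show ((n : MvPolynomial (Fin 3) k)) = C (n : k) by simp, C_apply, X_dvd_monomial]
  simp [hn]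

lemma key19 (k : Type) [Field k] [CharZero k] (a b c : MvPolynomial (Fin 3) k)
    (h : 2 * X 2 ^ 2 * a - X 1 * X 2 * b - (2 * X 0 * X 2 + 3 * X 1 ^ 2) * c = 0) :
    ∃ p q : MvPolynomial (Fin 3) k,
      a = p * X 1 + q * X 0 ∧ b = p * (2 * X 2) - q * (3 * X 1) ∧ c = q * X 2 := by
  have hz := primeX19 k 2
  have hy := primeX19 k 1
  have h1 : (X 2 : MvPolynomial (Fin 3) k) ∣ 3 * (X 1 ^ 2 * c) :=
    ⟨2 * X 2 * a - X 1 * b - 2 * X 0 * c, by linear_combination -h⟩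
  have hc : (X 2 : MvPolynomial (Fin 3) k) ∣ c := by
    rcases hz.2.2 _ _ h1 with h' | h'
    · exact absurd h' (notdvd_const19 k 2 3 (by norm_num))
    rcases hz.2.2 _ _ h' with h'' | h''
    · have := hz.dvd_of_dvd_pow h''
      rw [X_dvd_X] at this
      exact absurd this (by decide)
    · exact h''
  obtain ⟨q, hq⟩ := hc
  have h2 : 2 * X 2 * a - X 1 * b - (2 * X 0 * X 2 + 3 * X 1 ^ 2) * q = 0 := by
    apply mul_left_cancel₀ hz.ne_zero
    rw [mul_zero]
    linear_combination h + (2 * X 0 * X 2 + 3 * X 1 ^ 2) * hq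
  have h3 : (X 1 : MvPolynomial (Fin 3) k) ∣ 2 * (X 2 * (a - q * X 0)) :=
    ⟨b + 3 * q * X 1, by linear_combination h2⟩
  have ha : (X 1 : MvPolynomial (Fin 3) k) ∣ a - q * X 0 := by
    rcases hy.2.2 _ _ h3 with h' | h'
    · exact absurd h' (notdvd_const19 k 1 2 (by norm_num))
    rcases hy.2.2 _ _ h' with h'' | h''
    · rw [X_dvd_X] at h''
      exact absurd h'' (by decide)
    · exact h''
  obtain ⟨p, hp⟩ := ha
  have hb : b + 3 * q * X 1 = 2 * X 2 * p := by
    apply mul_left_cancel₀ hy.ne_zero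
    linear_combination -h2 + 2 * X 2 * hp
  exact ⟨p, q, by linear_combination hp, by linear_combination hb, by linear_combination hq⟩


/-- The module `M = R³/⟨(y, 2z, 0), (x, -3y, z)⟩`: three generators `δ₂, δ₃, δ₄` with the
relations `y δ₂ + 2z δ₃ = 0` and `x δ₂ - 3y δ₃ + z δ₄ = 0`.
(Here `x = X 0`, `y = X 1`, `z = X 2` in `R = k[x,y,z]`.) -/
noncomputable def relSub19 (k : Type) [Field k] :
    Submodule (MvPolynomial (Fin 3) k) (Fin 3 → MvPolynomial (Fin 3) k) :=
  Submodule.span _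
    {![(X 1 : MvPolynomial (Fin 3) k), 2 * X 2, 0],
      ![(X 0 : MvPolynomial (Fin 3) k), -3 * X 1, X 2]}

/-- The map `φ : M → R` with `φ(δ₂) = 2z²`, `φ(δ₃) = -yz`, `φ(δ₄) = -(2xz + 3y²)`, induced by
`(u₂, u₃, u₄) ↦ 2z²·u₂ - yz·u₃ - (2xz + 3y²)·u₄` (which kills both relations). -/
noncomputable def phi19 (k : Type) [Field k] :
    ((Fin 3 → MvPolynomial (Fin 3) k) ⧸ relSub19 k) →ₗ[MvPolynomial (Fin 3) k]
      MvPolynomial (Fin 3) k :=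
  Submodule.liftQ (relSub19 k)
    ((2 * (X 2 : MvPolynomial (Fin 3) k) ^ 2) • LinearMap.proj 0 +
      (-((X 1 : MvPolynomial (Fin 3) k) * X 2)) • LinearMap.proj 1 +
      (-(2 * (X 0 : MvPolynomial (Fin 3) k) * X 2 + 3 * X 1 ^ 2)) • LinearMap.proj 2)
    (by
      rw [relSub19, Submodule.span_le]
      rintro v hv
      rcases hv with rfl | rfl <;>
        · simp [LinearMap.mem_ker]
          ring)

/-- Over a field of characteristic `0`, the map
`φ : R³/⟨(y,2z,0), (x,-3y,z)⟩ → R` given by `φ(δ₂) = 2z²`, `φ(δ₃) = -yz`,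
`φ(δ₄) = -(2xz + 3y²)` is a well-defined injective `R`-module homomorphism, with image the
ideal `⟨2z², yz, 2xz + 3y²⟩`. -/
theorem statement_19 (k : Type) [Field k] [CharZero k] :
    Function.Injective (phi19 k) ∧
      LinearMap.range (phi19 k) =
        (Ideal.span {2 * (X 2 : MvPolynomial (Fin 3) k) ^ 2, X 1 * X 2,
            2 * X 0 * X 2 + 3 * (X 1 : MvPolynomial (Fin 3) k) ^ 2} :
          Ideal (MvPolynomial (Fin 3) k)).restrictScalars (MvPolynomial (Fin 3) k) := by
  constructor
  · rw [← LinearMap.ker_eq_bot, phi19]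
    apply Submodule.ker_liftQ_eq_bot
    intro v hv
    simp only [LinearMap.mem_ker, LinearMap.add_apply, LinearMap.smul_apply,
      LinearMap.proj_apply, smul_eq_mul] at hv
    obtain ⟨p, q, h1, h2, h3⟩ := key19 k (v 0) (v 1) (v 2) (by linear_combination hv)
    rw [relSub19, Submodule.mem_span_pair]
    refine ⟨p, q, ?_⟩
    funext i
    fin_cases i <;> simp
    · linear_combination -h1
    · linear_combination -h2
    · linear_combination -h3
  · rw [phi19, Submodule.range_liftQ]
    apply le_antisymm
    · rintro u ⟨v, rfl⟩
      simp only [LinearMap.add_apply, LinearMap.smul_apply, LinearMap.proj_apply, smul_eq_mul,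
        Submodule.restrictScalars_mem]
      have m1 : (2 * (X 2 : MvPolynomial (Fin 3) k) ^ 2) ∈ Ideal.span
          {2 * (X 2 : MvPolynomial (Fin 3) k) ^ 2, X 1 * X 2,
            2 * X 0 * X 2 + 3 * (X 1 : MvPolynomial (Fin 3) k) ^ 2} :=
        Ideal.subset_span (by simp)
      have m2 : ((X 1 : MvPolynomial (Fin 3) k) * X 2) ∈ Ideal.span
          {2 * (X 2 : MvPolynomial (Fin 3) k) ^ 2, X 1 * X 2,
            2 * X 0 * X 2 + 3 * (X 1 : MvPolynomial (Fin 3) k) ^ 2} :=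
        Ideal.subset_span (by simp)
      have m3 : (2 * (X 0 : MvPolynomial (Fin 3) k) * X 2 + 3 * X 1 ^ 2) ∈ Ideal.span
          {2 * (X 2 : MvPolynomial (Fin 3) k) ^ 2, X 1 * X 2,
            2 * X 0 * X 2 + 3 * (X 1 : MvPolynomial (Fin 3) k) ^ 2} :=
        Ideal.subset_span (by simp)
      have : 2 * (X 2 : MvPolynomial (Fin 3) k) ^ 2 * v 0 + -(X 1 * X 2) * v 1 +
          -(2 * X 0 * X 2 + 3 * X 1 ^ 2) * v 2 =
          v 0 * (2 * X 2 ^ 2) + (-(v 1)) * (X 1 * X 2) +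
            (-(v 2)) * (2 * X 0 * X 2 + 3 * X 1 ^ 2) := by ring
      rw [this]
      exact Ideal.add_mem _ (Ideal.add_mem _ (Ideal.mul_mem_left _ _ m1)
        (Ideal.mul_mem_left _ _ m2)) (Ideal.mul_mem_left _ _ m3)
    · intro u hu
      simp only [Submodule.restrictScalars_mem] at hu
      refine Submodule.span_le.mpr ?_ hu
      rintro w (rfl | rfl | rfl)
      · exact ⟨![1, 0, 0], by simp⟩
      · exact ⟨![0, -1, 0], by simp⟩
      · exact ⟨![0, 0, -1], by simp⟩
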